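/- Let {X(n)}_{q_n ≤ Q} be random variables with |X(n)| ≤ 1 and {Y(n)}_{q_n ≤ Q} be random variables with |Y(n)| ≤ 1, such that for all ℓ ≤ L and all choices n_1, ..., n_ℓ of indices, E(X(n_1)···X(n_ℓ)) = E(Y(n_1)···Y(n_ℓ)) + O(e^{−L}). Set H_X(Q) = ∑_{q_n ≤ Q} X(n)/q_n, H_Y(Q) = ∑_{q_n ≤ Q} Y(n)/q_n, and H(Q) = ∑_{q_n ≤ Q} 1/q_n. Then for all complex s with |s| ≤ L/(10 H(Q)), one has E(e^{s H_X(Q)}) = E(e^{s H_Y(Q)}) + O(e^{−L/2}). -/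

import Mathlib

open Real MeasureTheory Finset

open Finset in
lemma aux_exp_tail (z : ℂ) (N : ℕ) (hN : 1 ≤ N) (hz : ‖z‖ ≤ N / 10) :
    ‖Complex.exp z - ∑ k ∈ Finset.range N, z ^ k / k.factorial‖
      ≤ 2 * (‖z‖ ^ N / N.factorial) := by
  have hsum : Summable (fun k : ℕ => z ^ k / (k.factorial : ℂ)) :=
    NormedSpace.expSeries_div_summable z
  have hexp : Complex.exp z = ∑' k : ℕ, z ^ k / k.factorial := by
    rw [Complex.exp_eq_exp_ℂ, NormedSpace.exp_eq_tsum_div]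
  have hsplit := hsum.sum_add_tsum_nat_add N
  have h1 : Complex.exp z - ∑ k ∈ Finset.range N, z ^ k / k.factorial
      = ∑' j : ℕ, z ^ (j + N) / ((j + N).factorial : ℂ) := by
    rw [hexp, ← hsplit]; ring
  rw [h1]
  have hz0 : (0:ℝ) ≤ ‖z‖ := norm_nonneg z
  have hnormeq : (fun j : ℕ => ‖z ^ (j + N) / ((j + N).factorial : ℂ)‖)
      = fun j : ℕ => ‖z‖ ^ (j + N) / ((j + N).factorial : ℝ) := by
    funext j; rw [norm_div, norm_pow, Complex.norm_natCast]
  have hnormsum : Summable (fun k : ℕ => ‖z‖ ^ k / (k.factorial : ℝ)) :=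
    NormedSpace.expSeries_div_summable ‖z‖
  have htail : Summable (fun j : ℕ => ‖z‖ ^ (j + N) / ((j + N).factorial : ℝ)) :=
    (summable_nat_add_iff N).2 hnormsum
  have hterm : ∀ j : ℕ, ‖z‖ ^ (j + N) / ((j + N).factorial : ℝ)
      ≤ (‖z‖ ^ N / N.factorial) * (1/10) ^ j := by
    intro j
    have hfac : (N.factorial : ℝ) * ((N:ℝ)+1) ^ j ≤ ((j + N).factorial : ℝ) := by
      have := Nat.factorial_mul_pow_le_factorial (m := N) (n := j)
      rw [Nat.add_comm j N]
      exact_mod_cast this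
    have hq : ‖z‖ / ((N:ℝ)+1) ≤ 1/10 := by
      rw [div_le_div_iff₀ (by positivity) (by norm_num)]
      nlinarith [hz]
    calc ‖z‖ ^ (j + N) / ((j + N).factorial : ℝ)
        ≤ ‖z‖ ^ (j + N) / ((N.factorial : ℝ) * ((N:ℝ)+1) ^ j) := by
          gcongr
      _ = (‖z‖ ^ N / N.factorial) * (‖z‖ / ((N:ℝ)+1)) ^ j := by
          rw [pow_add, div_pow]; field_simp
      _ ≤ (‖z‖ ^ N / N.factorial) * (1/10) ^ j := by
          gcongr
  have hgeo : Summable (fun j : ℕ => (‖z‖ ^ N / N.factorial) * (1/10 : ℝ) ^ j) :=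
    (summable_geometric_of_lt_one (by norm_num) (by norm_num)).mul_left _
  calc ‖∑' j : ℕ, z ^ (j + N) / ((j + N).factorial : ℂ)‖
      ≤ ∑' j : ℕ, ‖z ^ (j + N) / ((j + N).factorial : ℂ)‖ := by
        apply norm_tsum_le_tsum_norm
        rw [hnormeq]; exact htail
    _ = ∑' j : ℕ, ‖z‖ ^ (j + N) / ((j + N).factorial : ℝ) := by rw [hnormeq]
    _ ≤ ∑' j : ℕ, (‖z‖ ^ N / N.factorial) * (1/10 : ℝ) ^ j :=
        Summable.tsum_le_tsum hterm htail hgeo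
    _ = (‖z‖ ^ N / N.factorial) * (1 - 1/10)⁻¹ := by
        rw [tsum_mul_left, tsum_geometric_of_lt_one (by norm_num) (by norm_num)]
    _ ≤ 2 * (‖z‖ ^ N / N.factorial) := by
        rw [mul_comm]
        have h10 : ((1:ℝ) - 1/10)⁻¹ ≤ 2 := by norm_num
        have : (0:ℝ) ≤ ‖z‖ ^ N / N.factorial := by positivity
        nlinarith
lemma aux_small (L : ℝ) (hL : 0 < L) (N : ℕ) (hLN : L ≤ N) (x : ℝ) (hx0 : 0 ≤ x)
    (hx : x ≤ L / 10) : x ^ N / N.factorial ≤ Real.exp (-L) := by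
  have hN0 : (0:ℝ) < N := lt_of_lt_of_le hL hLN
  have hfacpos : (0:ℝ) < N.factorial := by positivity
  have h1 : x ^ N ≤ ((N:ℝ)/10) ^ N := by
    apply pow_le_pow_left₀ hx0
    calc x ≤ L/10 := hx
      _ ≤ (N:ℝ)/10 := by linarith
  have h2 : (N:ℝ) ^ N / N.factorial ≤ Real.exp N := by
    have := Real.sum_le_exp_of_nonneg (le_of_lt hN0) (N+1)
    refine le_trans ?_ this
    have := Finset.single_le_sum (f := fun i : ℕ => (N:ℝ) ^ i / i.factorial)
      (fun i _ => by positivity) (Finset.self_mem_range_succ N)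
    exact this
  have hexp2 : Real.exp 2 ≤ 10 := by
    have h := Real.exp_one_lt_d9
    have : Real.exp 2 = Real.exp 1 * Real.exp 1 := by
      rw [← Real.exp_add]; norm_num
    nlinarith [Real.exp_pos 1]
  have h3 : Real.exp N / 10 ^ N ≤ Real.exp (-(N:ℝ)) := by
    rw [Real.exp_neg, div_le_iff₀ (by positivity)]
    rw [inv_mul_eq_div, le_div_iff₀ (Real.exp_pos _)]
    calc Real.exp N * Real.exp N = (Real.exp 2) ^ N := by
          rw [← Real.exp_add, ← Real.exp_nat_mul]
          ring_nf
      _ ≤ 10 ^ N := pow_le_pow_left₀ (le_of_lt (Real.exp_pos 2)) hexp2 N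
  calc x ^ N / N.factorial ≤ ((N:ℝ)/10) ^ N / N.factorial := by gcongr
    _ = ((N:ℝ) ^ N / N.factorial) / 10 ^ N := by rw [div_pow]; ring
    _ ≤ Real.exp N / 10 ^ N := by gcongr
    _ ≤ Real.exp (-(N:ℝ)) := h3
    _ ≤ Real.exp (-L) := by apply Real.exp_le_exp.2; linarith
open Real MeasureTheory Finset

lemma aux_norm_exp (w : ℂ) : ‖Complex.exp w‖ ≤ Real.exp ‖w‖ := by
  rw [Complex.norm_exp]
  exact Real.exp_le_exp.2 (Complex.re_le_norm w)
open MeasureTheory Finset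

lemma aux_int {Ω : Type} [MeasurableSpace Ω] {E : Type} [NormedAddCommGroup E]
    (μ : Measure Ω) [IsFiniteMeasure μ] (f : Ω → E) (hf : AEStronglyMeasurable f μ)
    (C : ℝ) (hb : ∀ ω, ‖f ω‖ ≤ C) : Integrable f μ :=
  ⟨hf, HasFiniteIntegral.of_bounded (ae_of_all _ hb)⟩

lemma aux_moment {ι : Type} [Fintype ι] {Ω : Type} [MeasurableSpace Ω]
    (μ : Measure Ω) [IsProbabilityMeasure μ]
    (q : ι → ℝ) (hq : ∀ i, 1 ≤ q i)
    (X Y : ι → Ω → ℝ) (hmX : ∀ i, Measurable (X i)) (hmY : ∀ i, Measurable (Y i))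
    (hbX : ∀ i ω, |X i ω| ≤ 1) (hbY : ∀ i ω, |Y i ω| ≤ 1)
    (k : ℕ) (ε : ℝ) (hε : 0 ≤ ε)
    (hmom : ∀ n : Fin k → ι,
      |(∫ ω, ∏ j, X (n j) ω ∂μ) - ∫ ω, ∏ j, Y (n j) ω ∂μ| ≤ ε) :
    |(∫ ω, (∑ i, X i ω / q i) ^ k ∂μ) - ∫ ω, (∑ i, Y i ω / q i) ^ k ∂μ|
      ≤ ε * (∑ i, 1 / q i) ^ k := by
  classical
  have hq0 : ∀ i, (0:ℝ) < q i := fun i => lt_of_lt_of_le one_pos (hq i)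
  -- pointwise expansion
  have hexpand : ∀ (Z : ι → Ω → ℝ) (ω : Ω), (∑ i, Z i ω / q i) ^ k
      = ∑ p : Fin k → ι, (∏ j, Z (p j) ω) / ∏ j, q (p j) := by
    intro Z ω
    rw [Finset.sum_pow' Finset.univ (fun i => Z i ω / q i) k, Fintype.piFinset_univ]
    refine Finset.sum_congr rfl fun p _ => ?_
    rw [← Finset.prod_div_distrib]
  have hintprod : ∀ (Z : ι → Ω → ℝ), (∀ i, Measurable (Z i)) → (∀ i ω, |Z i ω| ≤ 1) →
      ∀ p : Fin k → ι, Integrable (fun ω => ∏ j, Z (p j) ω) μ := by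
    intro Z hm hb p
    refine aux_int μ _ (Measurable.aestronglyMeasurable ?_) 1 fun ω => ?_
    · exact Finset.measurable_prod _ fun j _ => hm (p j)
    · rw [Real.norm_eq_abs, Finset.abs_prod]
      exact Finset.prod_le_one (fun j _ => abs_nonneg _) (fun j _ => hb (p j) ω)
  have hint : ∀ (Z : ι → Ω → ℝ), (∀ i, Measurable (Z i)) → (∀ i ω, |Z i ω| ≤ 1) →
      ∫ ω, (∑ i, Z i ω / q i) ^ k ∂μ
        = ∑ p : Fin k → ι, (∫ ω, ∏ j, Z (p j) ω ∂μ) / ∏ j, q (p j) := by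
    intro Z hm hb
    calc ∫ ω, (∑ i, Z i ω / q i) ^ k ∂μ
        = ∫ ω, ∑ p : Fin k → ι, (∏ j, Z (p j) ω) / ∏ j, q (p j) ∂μ := by
          refine integral_congr_ae (ae_of_all _ fun ω => hexpand Z ω)
      _ = ∑ p : Fin k → ι, ∫ ω, (∏ j, Z (p j) ω) / ∏ j, q (p j) ∂μ := by
          refine integral_finset_sum _ fun p _ => ?_
          exact (hintprod Z hm hb p).div_const _
      _ = ∑ p : Fin k → ι, (∫ ω, ∏ j, Z (p j) ω ∂μ) / ∏ j, q (p j) := by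
          refine Finset.sum_congr rfl fun p _ => integral_div _ _
  rw [hint X hmX hbX, hint Y hmY hbY, ← Finset.sum_sub_distrib]
  have hHk : (∑ i, 1 / q i) ^ k = ∑ p : Fin k → ι, ∏ j, 1 / q (p j) := by
    rw [Finset.sum_pow' Finset.univ (fun i => 1 / q i) k, Fintype.piFinset_univ]
  calc |∑ p : Fin k → ι, ((∫ ω, ∏ j, X (p j) ω ∂μ) / ∏ j, q (p j)
          - (∫ ω, ∏ j, Y (p j) ω ∂μ) / ∏ j, q (p j))|
      ≤ ∑ p : Fin k → ι, |(∫ ω, ∏ j, X (p j) ω ∂μ) / ∏ j, q (p j)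
          - (∫ ω, ∏ j, Y (p j) ω ∂μ) / ∏ j, q (p j)| := Finset.abs_sum_le_sum_abs _ _
    _ ≤ ∑ p : Fin k → ι, ε * ∏ j, 1 / q (p j) := by
        refine Finset.sum_le_sum fun p _ => ?_
        rw [div_sub_div_same, abs_div]
        have hD : (0:ℝ) < ∏ j, q (p j) := Finset.prod_pos fun j _ => hq0 (p j)
        rw [abs_of_pos hD, div_le_iff₀ hD]
        have hone : (∏ j, 1 / q (p j)) * ∏ j, q (p j) = 1 := by
          rw [← Finset.prod_mul_distrib]
          rw [Finset.prod_congr rfl fun j _ => one_div_mul_cancel (ne_of_gt (hq0 (p j)))]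
          simp
        rw [mul_assoc, hone, mul_one]
        exact hmom p
    _ = ε * (∑ i, 1 / q i) ^ k := by rw [← Finset.mul_sum, hHk]


/-- If bounded random variables `X(n)`, `Y(n)` have all moments up to order `L`
equal up to `O(e^{-L})`, then the moment generating functions of `H_X(Q) = ∑ X(n)/qₙ` and
`H_Y(Q) = ∑ Y(n)/qₙ` agree up to `O(e^{-L/2})` for `|s| ≤ L/(10 H(Q))`. -/
theorem stmt_10 : ∀ C₁ > (0 : ℝ), ∃ C₂ > (0 : ℝ),
    ∀ (ι : Type) [Fintype ι] (Ω : Type) [MeasurableSpace Ω] (μ : Measure Ω),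
      IsProbabilityMeasure μ →
      ∀ (q : ι → ℝ), (∀ i, 1 ≤ q i) →
      ∀ (X Y : ι → Ω → ℝ), (∀ i, Measurable (X i)) → (∀ i, Measurable (Y i)) →
        (∀ i ω, |X i ω| ≤ 1) → (∀ i ω, |Y i ω| ≤ 1) →
      ∀ L : ℝ, 0 < L →
        (∀ ℓ : ℕ, (ℓ : ℝ) ≤ L → ∀ n : Fin ℓ → ι,
          |(∫ ω, ∏ j, X (n j) ω ∂μ) - ∫ ω, ∏ j, Y (n j) ω ∂μ| ≤ C₁ * Real.exp (-L)) →
      ∀ s : ℂ, ‖s‖ ≤ L / (10 * ∑ i, 1 / q i) →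
        ‖(∫ ω, Complex.exp (s * ((∑ i, X i ω / q i : ℝ))) ∂μ)
            - ∫ ω, Complex.exp (s * ((∑ i, Y i ω / q i : ℝ))) ∂μ‖
          ≤ C₂ * Real.exp (-L / 2) := by
  intro C₁ hC₁
  refine ⟨C₁ + 4, by positivity, ?_⟩
  intro ι _ Ω _ μ hμ q hq X Y hmX hmY hbX hbY L hL hmom s hs
  classical
  rcases isEmpty_or_nonempty ι with hι | hι
  · have h0 : ∀ (Z : ι → Ω → ℝ) (ω : Ω), (∑ i, Z i ω / q i) = 0 := by
      intro Z ω; simp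
    simp only [h0, sub_self, norm_zero]
    positivity
  -- Nonempty case
  have hq0 : ∀ i, (0:ℝ) < q i := fun i => lt_of_lt_of_le one_pos (hq i)
  set H : ℝ := ∑ i, 1 / q i with hHdef
  have hHpos : 0 < H := Finset.sum_pos (fun i _ => one_div_pos.2 (hq0 i)) Finset.univ_nonempty
  have hsH : ‖s‖ * H ≤ L / 10 := by
    calc ‖s‖ * H ≤ (L / (10 * H)) * H := mul_le_mul_of_nonneg_right hs hHpos.le
      _ = L / 10 := by field_simp
  have hs0 : (0:ℝ) ≤ ‖s‖ := norm_nonneg s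
  set N : ℕ := ⌈L⌉₊ with hNdef
  have hLN : L ≤ (N:ℝ) := Nat.le_ceil L
  have hN1 : 1 ≤ N := Nat.ceil_pos.2 hL
  have hL10 : (0:ℝ) ≤ L / 10 := by linarith
  -- measurability and bounds
  have hHZmeas : ∀ (Z : ι → Ω → ℝ), (∀ i, Measurable (Z i)) →
      Measurable (fun ω => ∑ i, Z i ω / q i) := fun Z hm =>
    Finset.measurable_sum _ fun i _ => (hm i).div_const _
  have hHZb : ∀ (Z : ι → Ω → ℝ), (∀ i ω, |Z i ω| ≤ 1) → ∀ ω,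
      |∑ i, Z i ω / q i| ≤ H := by
    intro Z hb ω
    calc |∑ i, Z i ω / q i| ≤ ∑ i, |Z i ω / q i| := Finset.abs_sum_le_sum_abs _ _
      _ ≤ ∑ i, 1 / q i := by
          refine Finset.sum_le_sum fun i _ => ?_
          rw [abs_div, abs_of_pos (hq0 i)]
          exact div_le_div₀ zero_le_one (hb i ω) (hq0 i) le_rfl
  have hargb : ∀ (Z : ι → Ω → ℝ), (∀ i ω, |Z i ω| ≤ 1) → ∀ ω,
      ‖s * ((∑ i, Z i ω / q i : ℝ) : ℂ)‖ ≤ L / 10 := by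
    intro Z hb ω
    rw [norm_mul, Complex.norm_real, Real.norm_eq_abs]
    calc ‖s‖ * |∑ i, Z i ω / q i| ≤ ‖s‖ * H :=
          mul_le_mul_of_nonneg_left (hHZb Z hb ω) hs0
      _ ≤ L / 10 := hsH
  have hargmeas : ∀ (Z : ι → Ω → ℝ), (∀ i, Measurable (Z i)) →
      Measurable (fun ω => s * ((∑ i, Z i ω / q i : ℝ) : ℂ)) := fun Z hm =>
    (Complex.measurable_ofReal.comp (hHZmeas Z hm)).const_mul s
  -- integrability
  have hintexp : ∀ (Z : ι → Ω → ℝ), (∀ i, Measurable (Z i)) → (∀ i ω, |Z i ω| ≤ 1) →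
      Integrable (fun ω => Complex.exp (s * ((∑ i, Z i ω / q i : ℝ) : ℂ))) μ := by
    intro Z hm hb
    refine aux_int μ _ (Complex.measurable_exp.comp (hargmeas Z hm)).aestronglyMeasurable
      (Real.exp (L/10)) fun ω => ?_
    exact (aux_norm_exp _).trans (Real.exp_le_exp.2 (hargb Z hb ω))
  have hPbound : ∀ (Z : ι → Ω → ℝ), (∀ i ω, |Z i ω| ≤ 1) → ∀ ω,
      ‖∑ k ∈ Finset.range N, (s * ((∑ i, Z i ω / q i : ℝ) : ℂ)) ^ k / k.factorial‖
        ≤ Real.exp (L/10) := by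
    intro Z hb ω
    calc ‖∑ k ∈ Finset.range N, (s * ((∑ i, Z i ω / q i : ℝ) : ℂ)) ^ k / k.factorial‖
        ≤ ∑ k ∈ Finset.range N, ‖(s * ((∑ i, Z i ω / q i : ℝ) : ℂ)) ^ k / (k.factorial : ℂ)‖ :=
          norm_sum_le _ _
      _ ≤ ∑ k ∈ Finset.range N, (L/10) ^ k / k.factorial := by
          refine Finset.sum_le_sum fun k _ => ?_
          rw [norm_div, norm_pow, Complex.norm_natCast]
          gcongr
          exact hargb Z hb ω
      _ ≤ Real.exp (L/10) := Real.sum_le_exp_of_nonneg hL10 N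
  have hintP : ∀ (Z : ι → Ω → ℝ), (∀ i, Measurable (Z i)) → (∀ i ω, |Z i ω| ≤ 1) →
      Integrable (fun ω =>
        ∑ k ∈ Finset.range N, (s * ((∑ i, Z i ω / q i : ℝ) : ℂ)) ^ k / k.factorial) μ := by
    intro Z hm hb
    refine aux_int μ _ (Measurable.aestronglyMeasurable ?_) (Real.exp (L/10)) (hPbound Z hb)
    exact Finset.measurable_sum _ fun k _ => ((hargmeas Z hm).pow_const k).div_const _
  -- tail bound
  have tail : ∀ (Z : ι → Ω → ℝ), (∀ i, Measurable (Z i)) → (∀ i ω, |Z i ω| ≤ 1) →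
      ‖(∫ ω, Complex.exp (s * ((∑ i, Z i ω / q i : ℝ) : ℂ)) ∂μ)
        - ∫ ω, ∑ k ∈ Finset.range N, (s * ((∑ i, Z i ω / q i : ℝ) : ℂ)) ^ k / k.factorial ∂μ‖
        ≤ 2 * Real.exp (-L) := by
    intro Z hm hb
    rw [← integral_sub (hintexp Z hm hb) (hintP Z hm hb)]
    have hpt : ∀ ω, ‖Complex.exp (s * ((∑ i, Z i ω / q i : ℝ) : ℂ))
        - ∑ k ∈ Finset.range N, (s * ((∑ i, Z i ω / q i : ℝ) : ℂ)) ^ k / k.factorial‖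
        ≤ 2 * Real.exp (-L) := by
      intro ω
      have h1 := aux_exp_tail (s * ((∑ i, Z i ω / q i : ℝ) : ℂ)) N hN1
        ((hargb Z hb ω).trans (by gcongr))
      refine h1.trans ?_
      have h2 := aux_small L hL N hLN ‖s * ((∑ i, Z i ω / q i : ℝ) : ℂ)‖
        (norm_nonneg _) (hargb Z hb ω)
      linarith
    have := norm_integral_le_of_norm_le_const (μ := μ)
      (C := 2 * Real.exp (-L)) (ae_of_all _ hpt)
    simpa using this
  -- middle identity
  have mid : ∀ (Z : ι → Ω → ℝ), (∀ i, Measurable (Z i)) → (∀ i ω, |Z i ω| ≤ 1) →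
      (∫ ω, ∑ k ∈ Finset.range N, (s * ((∑ i, Z i ω / q i : ℝ) : ℂ)) ^ k / k.factorial ∂μ)
        = ∑ k ∈ Finset.range N, s ^ k / (k.factorial : ℂ)
            * ((∫ ω, (∑ i, Z i ω / q i) ^ k ∂μ : ℝ) : ℂ) := by
    intro Z hm hb
    rw [integral_finset_sum]
    · refine Finset.sum_congr rfl fun k _ => ?_
      have hptk : ∀ ω, (s * ((∑ i, Z i ω / q i : ℝ) : ℂ)) ^ k / (k.factorial : ℂ)
          = (s ^ k / (k.factorial : ℂ)) * (((∑ i, Z i ω / q i) ^ k : ℝ) : ℂ) := by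
        intro ω; push_cast; ring
      rw [integral_congr_ae (ae_of_all _ hptk), integral_const_mul]
      congr 1
      exact integral_ofReal
    · intro k _
      refine aux_int μ _ (Measurable.aestronglyMeasurable ?_) ((L/10) ^ k / k.factorial)
        fun ω => ?_
      · exact ((hargmeas Z hm).pow_const k).div_const _
      · rw [norm_div, norm_pow, Complex.norm_natCast]
        gcongr
        exact hargb Z hb ω
  -- moment bounds
  have hmomk : ∀ k ∈ Finset.range N,
      |(∫ ω, (∑ i, X i ω / q i) ^ k ∂μ) - ∫ ω, (∑ i, Y i ω / q i) ^ k ∂μ|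
        ≤ (C₁ * Real.exp (-L)) * H ^ k := by
    intro k hk
    refine aux_moment μ q hq X Y hmX hmY hbX hbY k _ (by positivity) fun n => ?_
    exact hmom k (le_of_lt (Nat.lt_ceil.1 (Finset.mem_range.1 hk))) n
  -- middle bound
  have midbound :
      ‖(∑ k ∈ Finset.range N, s ^ k / (k.factorial : ℂ)
            * ((∫ ω, (∑ i, X i ω / q i) ^ k ∂μ : ℝ) : ℂ))
        - ∑ k ∈ Finset.range N, s ^ k / (k.factorial : ℂ)
            * ((∫ ω, (∑ i, Y i ω / q i) ^ k ∂μ : ℝ) : ℂ)‖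
        ≤ C₁ * Real.exp (-L / 2) := by
    rw [← Finset.sum_sub_distrib]
    calc ‖∑ k ∈ Finset.range N, (s ^ k / (k.factorial : ℂ)
            * ((∫ ω, (∑ i, X i ω / q i) ^ k ∂μ : ℝ) : ℂ)
          - s ^ k / (k.factorial : ℂ) * ((∫ ω, (∑ i, Y i ω / q i) ^ k ∂μ : ℝ) : ℂ))‖
        ≤ ∑ k ∈ Finset.range N, ‖s ^ k / (k.factorial : ℂ)
            * ((∫ ω, (∑ i, X i ω / q i) ^ k ∂μ : ℝ) : ℂ)
          - s ^ k / (k.factorial : ℂ) * ((∫ ω, (∑ i, Y i ω / q i) ^ k ∂μ : ℝ) : ℂ)‖ :=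
          norm_sum_le _ _
      _ ≤ ∑ k ∈ Finset.range N, (‖s‖ ^ k / k.factorial) * ((C₁ * Real.exp (-L)) * H ^ k) := by
          refine Finset.sum_le_sum fun k hk => ?_
          rw [← mul_sub, ← Complex.ofReal_sub, norm_mul, norm_div, norm_pow,
            Complex.norm_natCast, Complex.norm_real, Real.norm_eq_abs]
          gcongr
          exact hmomk k hk
      _ = (C₁ * Real.exp (-L)) * ∑ k ∈ Finset.range N, (‖s‖ * H) ^ k / k.factorial := by
          rw [Finset.mul_sum]
          refine Finset.sum_congr rfl fun k _ => ?_
          rw [mul_pow]; ring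
      _ ≤ (C₁ * Real.exp (-L)) * Real.exp (‖s‖ * H) := by
          gcongr
          exact Real.sum_le_exp_of_nonneg (by positivity) N
      _ ≤ (C₁ * Real.exp (-L)) * Real.exp (L / 10) := by
          gcongr
      _ ≤ C₁ * Real.exp (-L / 2) := by
          rw [mul_assoc, ← Real.exp_add]
          gcongr
          linarith
  -- combine
  have tX := tail X hmX hbX
  have tY := tail Y hmY hbY
  rw [mid X hmX hbX] at tX
  rw [mid Y hmY hbY] at tY
  have hsplit : (∫ ω, Complex.exp (s * ((∑ i, X i ω / q i : ℝ) : ℂ)) ∂μ)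
      - ∫ ω, Complex.exp (s * ((∑ i, Y i ω / q i : ℝ) : ℂ)) ∂μ
    = ((∫ ω, Complex.exp (s * ((∑ i, X i ω / q i : ℝ) : ℂ)) ∂μ)
        - ∑ k ∈ Finset.range N, s ^ k / (k.factorial : ℂ)
            * ((∫ ω, (∑ i, X i ω / q i) ^ k ∂μ : ℝ) : ℂ))
      + ((∑ k ∈ Finset.range N, s ^ k / (k.factorial : ℂ)
            * ((∫ ω, (∑ i, X i ω / q i) ^ k ∂μ : ℝ) : ℂ))
        - ∑ k ∈ Finset.range N, s ^ k / (k.factorial : ℂ)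
            * ((∫ ω, (∑ i, Y i ω / q i) ^ k ∂μ : ℝ) : ℂ))
      + ((∑ k ∈ Finset.range N, s ^ k / (k.factorial : ℂ)
            * ((∫ ω, (∑ i, Y i ω / q i) ^ k ∂μ : ℝ) : ℂ))
        - ∫ ω, Complex.exp (s * ((∑ i, Y i ω / q i : ℝ) : ℂ)) ∂μ) := by ring
  rw [hsplit]
  have hEL : Real.exp (-L) ≤ Real.exp (-L / 2) := Real.exp_le_exp.2 (by linarith)
  calc ‖_ + _ + _‖ ≤ _ := norm_add₃_le
    _ ≤ 2 * Real.exp (-L) + C₁ * Real.exp (-L / 2) + 2 * Real.exp (-L) := by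
        refine add_le_add (add_le_add tX midbound) ?_
        rw [norm_sub_rev]
        exact tY
    _ ≤ (C₁ + 4) * Real.exp (-L / 2) := by nlinarith [Real.exp_pos (-L/2), Real.exp_pos (-L)]
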